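/- Let E be a real inner product space, m ≥ 1 an integer, and let v, w : Fin m → E be two orthonormal families (⟪v i, v j⟫ = δᵢⱼ and ⟪w i, w j⟫ = δᵢⱼ). Let M be the m × m real matrix with entries M i j = ⟪v i, w j⟫. Then |det M| ≤ 1; moreover, if |det M| = 1 then the linear span of {v 1, …, v m} equals the linear span of {w 1, …, w m}. -/

import Mathlib

open RealInnerProductSpace
open Matrix

section Aux

variable {E : Type*} [NormedAddCommGroup E] [InnerProductSpace ℝ E]

lemma aux_norm_sub_sq {m : ℕ} {v : Fin m → E} (hv : Orthonormal ℝ v) (x : E) :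
    ‖x - ∑ i, ⟪v i, x⟫ • v i‖ ^ 2 = ‖x‖ ^ 2 - ∑ i, ⟪v i, x⟫ ^ 2 := by
  set y := ∑ i, ⟪v i, x⟫ • v i with hy
  have hyy : ⟪y, y⟫ = ∑ i, ⟪v i, x⟫ ^ 2 := by
    rw [hy, hv.inner_sum]
    simp [sq]
  have hxy : ⟪x, y⟫ = ∑ i, ⟪v i, x⟫ ^ 2 := by
    rw [hy, inner_sum]
    simp [real_inner_smul_right, real_inner_comm, sq, mul_comm]
  have h1 : ⟪x - y, x - y⟫ = ⟪x, x⟫ - 2 * ⟪x, y⟫ + ⟪y, y⟫ := real_inner_sub_sub_self x y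
  have h2 : ⟪x - y, x - y⟫ = ‖x - y‖ ^ 2 := real_inner_self_eq_norm_sq _
  have h3 : ⟪x, x⟫ = ‖x‖ ^ 2 := real_inner_self_eq_norm_sq _
  rw [h2, h3, hxy, hyy] at h1
  linarith

lemma aux_bessel {m : ℕ} {v : Fin m → E} (hv : Orthonormal ℝ v) (x : E) :
    ∑ i, ⟪v i, x⟫ ^ 2 ≤ ‖x‖ ^ 2 := by
  have := aux_norm_sub_sq hv x
  nlinarith [sq_nonneg ‖x - ∑ i, ⟪v i, x⟫ • v i‖]

lemma aux_mem_span {m : ℕ} {v : Fin m → E} (hv : Orthonormal ℝ v) (x : E)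
    (h : ∑ i, ⟪v i, x⟫ ^ 2 = ‖x‖ ^ 2) : x ∈ Submodule.span ℝ (Set.range v) := by
  have h0 : ‖x - ∑ i, ⟪v i, x⟫ • v i‖ ^ 2 = 0 := by
    rw [aux_norm_sub_sq hv, h]; ring
  have hx : x = ∑ i, ⟪v i, x⟫ • v i := by
    have := pow_eq_zero_iff (n := 2) (by norm_num) |>.mp h0
    rw [norm_eq_zero, sub_eq_zero] at this
    exact this
  rw [hx]
  exact Submodule.sum_mem _ fun i _ =>
    Submodule.smul_mem _ _ (Submodule.subset_span ⟨i, rfl⟩)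

end Aux

/-- For two orthonormal families `v, w : Fin m → E` in a real inner product space, the
matrix `M i j = ⟪v i, w j⟫` has `|det M| ≤ 1`, with equality only if the spans of the
two families coincide. -/
theorem abs_det_gram_orthonormal_le_one {E : Type*} [NormedAddCommGroup E]
    [InnerProductSpace ℝ E] (m : ℕ) (hm : 1 ≤ m) (v w : Fin m → E)
    (hv : Orthonormal ℝ v) (hw : Orthonormal ℝ w)
    (M : Matrix (Fin m) (Fin m) ℝ) (hM : ∀ i j, M i j = ⟪v i, w j⟫) :
    |M.det| ≤ 1 ∧
      (|M.det| = 1 →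
        Submodule.span ℝ (Set.range v) = Submodule.span ℝ (Set.range w)) := by
  classical
  set G : Matrix (Fin m) (Fin m) ℝ := Mᴴ * M with hGdef
  have hPSD : G.PosSemidef := Matrix.posSemidef_conjTranspose_mul_self M
  have hG : G.IsHermitian := hPSD.1
  set lam := hG.eigenvalues with hlam
  -- each eigenvalue is ≤ 1
  have h0 : ∀ i, 0 ≤ lam i := fun i => hPSD.eigenvalues_nonneg i
  have h1 : ∀ i, lam i ≤ 1 := by
    intro i
    set e : EuclideanSpace ℝ (Fin m) := hG.eigenvectorBasis i with he
    have hnorm : ‖e‖ = 1 := hG.eigenvectorBasis.orthonormal.1 i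
    have hsum : ∑ j, (e j) ^ 2 = 1 := by
      have : ⟪e, e⟫ = ∑ j, e j * e j := by
        simp only [PiLp.inner_apply, RCLike.inner_apply, conj_trivial, mul_comm]
      rw [real_inner_self_eq_norm_sq, hnorm] at this
      simp [sq] at this ⊢
      linarith [this]
    have heig : lam i = dotProduct (M *ᵥ ⇑e) (M *ᵥ ⇑e) := by
      have h' := hG.eigenvalues_eq i
      have hmv : ∀ x : Fin m → ℝ, G *ᵥ x = Mᴴ *ᵥ (M *ᵥ x) := fun x => by
        rw [hGdef, ← Matrix.mulVec_mulVec]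
      rw [hmv, dotProduct_mulVec, Matrix.vecMul_conjTranspose] at h'
      simpa using h'
    set u : E := ∑ j, e j • w j with hu
    have hz : ∀ k, (M *ᵥ ⇑e) k = ⟪v k, u⟫ := by
      intro k
      simp [Matrix.mulVec, dotProduct, hu, inner_sum, real_inner_smul_right, hM, mul_comm]
    have hlamval : lam i = ∑ k, ⟪v k, u⟫ ^ 2 := by
      rw [heig]
      simp [dotProduct, hz, sq]
    have hunorm : ‖u‖ ^ 2 = 1 := by
      have : ⟪u, u⟫ = ∑ j, e j * e j := by
        rw [hu, hw.inner_sum]; simp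
      rw [real_inner_self_eq_norm_sq] at this
      rw [this]
      simpa [sq] using hsum
    calc lam i = ∑ k, ⟪v k, u⟫ ^ 2 := hlamval
      _ ≤ ‖u‖ ^ 2 := aux_bessel hv u
      _ = 1 := hunorm
  have hdetG : G.det = M.det ^ 2 := by
    have : Mᴴ = Mᵀ := Matrix.conjTranspose_eq_transpose_of_trivial M
    rw [hGdef, this, Matrix.det_mul, Matrix.det_transpose, sq]
  have hprod : G.det = ∏ i, lam i := by
    simpa using hG.det_eq_prod_eigenvalues
  have hprodle : ∏ i, lam i ≤ 1 :=
    Finset.prod_le_one (fun i _ => h0 i) (fun i _ => h1 i)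
  have hsq : M.det ^ 2 ≤ 1 := by rw [← hdetG, hprod]; exact hprodle
  have habs : |M.det| ≤ 1 := by nlinarith [abs_nonneg M.det, sq_abs M.det]
  refine ⟨habs, fun heq => ?_⟩
  -- equality case
  have hdet1 : ∏ i, lam i = 1 := by
    rw [← hprod, hdetG, ← sq_abs, heq]; norm_num
  have hall : ∀ i, lam i = 1 := by
    intro k
    by_contra hk
    have hk' : lam k < 1 := lt_of_le_of_ne (h1 k) hk
    have hrest : ∏ i ∈ Finset.univ.erase k, lam i ≤ 1 :=
      Finset.prod_le_one (fun i _ => h0 i) (fun i _ => h1 i)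
    have : ∏ i, lam i < 1 := by
      calc ∏ i, lam i = lam k * ∏ i ∈ Finset.univ.erase k, lam i :=
            (Finset.mul_prod_erase _ _ (Finset.mem_univ k)).symm
        _ ≤ lam k * 1 := mul_le_mul_of_nonneg_left hrest (h0 k)
        _ < 1 := by rw [mul_one]; exact hk'
    linarith [hdet1]
  have hGone : G = 1 := by
    have hspec := hG.spectral_theorem
    have hd : Matrix.diagonal (RCLike.ofReal ∘ hG.eigenvalues) = (1 : Matrix (Fin m) (Fin m) ℝ) := by
      ext i j
      rcases eq_or_ne i j with rfl | h
      · simp [Function.comp, ← hlam, hall i]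
      · simp [Matrix.diagonal_apply_ne _ h, Matrix.one_apply_ne h]
    rw [hd, map_one] at hspec
    exact hspec
  -- each w j lies in span v
  have hmem : ∀ j, w j ∈ Submodule.span ℝ (Set.range v) := by
    intro j
    apply aux_mem_span hv
    have hGjj : G j j = 1 := by rw [hGone]; simp
    have : ∑ i, ⟪v i, w j⟫ ^ 2 = 1 := by
      rw [hGdef] at hGjj
      simpa [Matrix.mul_apply, Matrix.conjTranspose_apply, hM, sq] using hGjj
    rw [this, hw.1 j]; norm_num
  have hle : Submodule.span ℝ (Set.range w) ≤ Submodule.span ℝ (Set.range v) := by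
    rw [Submodule.span_le]
    rintro _ ⟨j, rfl⟩
    exact hmem j
  haveI : FiniteDimensional ℝ (Submodule.span ℝ (Set.range v)) :=
    FiniteDimensional.span_of_finite ℝ (Set.finite_range v)
  have hfv : Module.finrank ℝ (Submodule.span ℝ (Set.range v)) = m := by
    rw [finrank_span_eq_card hv.linearIndependent, Fintype.card_fin]
  have hfw : Module.finrank ℝ (Submodule.span ℝ (Set.range w)) = m := by
    rw [finrank_span_eq_card hw.linearIndependent, Fintype.card_fin]
  exact (Submodule.eq_of_le_of_finrank_le hle (by rw [hfv, hfw])).symm
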